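/- Let ω̂ be a closed formal meromorphic one-form in two variables x, y whose polar set is contained in the union of the coordinate axes: ω̂ = (P̂/(x^{n+1}y^{m+1})) dx + (Q̂/(x^{n+1}y^{m+1})) dy with P̂, Q̂ ∈ ℂ[[x,y]] and n, m ∈ ℕ, and dω̂ = 0. Then there exist λ, μ ∈ ℂ and a formal power series f̂ ∈ ℂ[[x,y]] such that ω̂ = λ dx/x + μ dy/y + d(f̂/(xⁿyᵐ)). -/

import Mathlib

noncomputable section

namespace FormalGroups

/-- Formal power series in `n` complex variables: `ℂ[[z₁,…,zₙ]]`. -/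
abbrev FPS (n : ℕ) := MvPowerSeries (Fin n) ℂ

/-- Formal vector fields on `(ℂⁿ,0)`: derivations of `ℂ[[z₁,…,zₙ]]`. -/
abbrev FVF (n : ℕ) := Derivation ℂ (FPS n) (FPS n)

/-- The group of formal diffeomorphisms of `(ℂⁿ,0)`, encoded (isomorphically,
via the pullback action on power series) as the opposite of the group of
`ℂ`-algebra automorphisms of `ℂ[[z₁,…,zₙ]]`.  For `f : FDiff n`, `f.unop` is
the pullback `h ↦ h ∘ f`; multiplication `f * g` corresponds to the
composition `f ∘ g` of formal diffeomorphisms. -/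
abbrev FDiff (n : ℕ) := (FPS n ≃ₐ[ℂ] FPS n)ᵐᵒᵖ

/-- The coordinate power series `zᵢ`. -/
def Z {n : ℕ} (i : Fin n) : FPS n := MvPowerSeries.X i

/-- The `i`-th component power series `f̂ᵢ` of a formal diffeomorphism. -/
def comp {n : ℕ} (f : FDiff n) (i : Fin n) : FPS n := f.unop (Z i)

/-- Total degree of a monomial exponent. -/
def deg {n : ℕ} (d : Fin n →₀ ℕ) : ℕ := d.sum fun _ m => m

/-- A formal vector field belongs to `X̂(ℂⁿ,0)`: its coefficients vanish at `0`. -/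
def VanishesAtZero {n : ℕ} (X : FVF n) : Prop :=
  ∀ i, MvPowerSeries.constantCoeff (X (Z i)) = 0

/-- `f` is tangent to the identity: `f(z) = z + (order ≥ 2)`. -/
def TangentToId {n : ℕ} (f : FDiff n) : Prop :=
  (∀ i, MvPowerSeries.constantCoeff (comp f i) = 0) ∧
  ∀ i j, MvPowerSeries.coeff (Finsupp.single j 1) (comp f i) = if j = i then 1 else 0

/-- `f = exp (t X)`, expressed coefficientwise: `f̂ᵢ = Σ_j (tʲ/j!) X̂ʲ(zᵢ)`. -/
def IsExpT {n : ℕ} (f : FDiff n) (t : ℂ) (X : FVF n) : Prop :=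
  ∀ i d, MvPowerSeries.coeff d (comp f i) =
    ∑' j : ℕ, (t ^ j / (Nat.factorial j : ℂ)) * MvPowerSeries.coeff d ((⇑X)^[j] (Z i))

/-- `f = exp X`. -/
def IsExp {n : ℕ} (f : FDiff n) (X : FVF n) : Prop := IsExpT f 1 X

/-- The vector field `X` is invariant by the formal diffeomorphism `f`
(`f_* X = X`), i.e. `X` commutes with the pullback of `f`. -/
def InvariantBy {n : ℕ} (f : FDiff n) (X : FVF n) : Prop :=
  ∀ h, X (f.unop h) = f.unop (X h)

/-- `f_* X = c • X`  (projective invariance, with factor `c`). -/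
def ProjInvariantBy {n : ℕ} (f : FDiff n) (X : FVF n) (c : ℂ) : Prop :=
  ∀ h, X (f.unop h) = c • f.unop (X h)

/-- The two vector fields commute: `[X,Y] = 0`. -/
def CommuteVF {n : ℕ} (X Y : FVF n) : Prop := ∀ h, X (Y h) = Y (X h)

/-- All terms of the power series have degree at least `m`. -/
def OrderGE {n : ℕ} (F : FPS n) (m : ℕ) : Prop :=
  ∀ d, deg d < m → MvPowerSeries.coeff d F = 0

/-- The vector field vanishes to order at least `m` at the origin. -/
def VFOrderGE {n : ℕ} (X : FVF n) (m : ℕ) : Prop := ∀ i, OrderGE (X (Z i)) m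

/-- `f` is tangent to the identity with order (exactly) `k`:
`f(z) = z + f_{k+1}(z) + ⋯` with `f_{k+1} ≠ 0`. -/
def TangentOrder {n : ℕ} (f : FDiff n) (k : ℕ) : Prop :=
  1 ≤ k ∧
  (∀ i d, deg d ≤ k → MvPowerSeries.coeff d (comp f i) = MvPowerSeries.coeff d (Z i)) ∧
  ∃ i d, deg d = k + 1 ∧ MvPowerSeries.coeff d (comp f i) ≠ 0

/-- A dicritic diffeomorphism of order `k`: `f(z) = z + p(z)·z + (order ≥ k+2)`,
with `p ≠ 0` homogeneous of degree `k`. -/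
def IsDicriticDiffeo {n : ℕ} (f : FDiff n) (k : ℕ) : Prop :=
  1 ≤ k ∧
  (∀ i d, deg d ≤ k → MvPowerSeries.coeff d (comp f i) = MvPowerSeries.coeff d (Z i)) ∧
  ∃ p : MvPolynomial (Fin n) ℂ, p.IsHomogeneous k ∧ p ≠ 0 ∧
    ∀ i d, deg d = k + 1 →
      MvPowerSeries.coeff d (comp f i) = MvPowerSeries.coeff d ((p : FPS n) * Z i)

/-- A dicritic vector field of index `k` (order `k+1`):
`X = p(z)·R⃗ + (order ≥ k+2)` with `p ≠ 0` homogeneous of degree `k`,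
where `R⃗ = Σ zᵢ ∂/∂zᵢ` is the radial vector field. -/
def IsDicriticVF {n : ℕ} (X : FVF n) (k : ℕ) : Prop :=
  1 ≤ k ∧ VFOrderGE X (k + 1) ∧
  ∃ p : MvPolynomial (Fin n) ℂ, p.IsHomogeneous k ∧ p ≠ 0 ∧
    ∀ i d, deg d = k + 1 →
      MvPowerSeries.coeff d (X (Z i)) = MvPowerSeries.coeff d ((p : FPS n) * Z i)

/-- A regular dicritic vector field of index `k`: dicritic, and for the
homogeneous parts `pᵢ = q i` of degree `k+2` there are indices `i₀, j₀` with
`p` and `z_{j₀} q_{i₀} − z_{i₀} q_{j₀}` coprime. -/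
def IsRegDicriticVF {n : ℕ} (X : FVF n) (k : ℕ) : Prop :=
  1 ≤ k ∧ VFOrderGE X (k + 1) ∧
  ∃ (p : MvPolynomial (Fin n) ℂ) (q : Fin n → MvPolynomial (Fin n) ℂ),
    p.IsHomogeneous k ∧ p ≠ 0 ∧
    (∀ i d, deg d = k + 1 →
      MvPowerSeries.coeff d (X (Z i)) = MvPowerSeries.coeff d ((p : FPS n) * Z i)) ∧
    (∀ i, (q i).IsHomogeneous (k + 2)) ∧
    (∀ i d, deg d = k + 2 →
      MvPowerSeries.coeff d (X (Z i)) = MvPolynomial.coeff d (q i)) ∧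
    ∃ i₀ j₀ : Fin n,
      IsRelPrime p (MvPolynomial.X j₀ * q i₀ - MvPolynomial.X i₀ * q j₀)

/-- A regular dicritic diffeomorphism: its infinitesimal generator
`log f` is a regular dicritic vector field. -/
def IsRegDicriticDiffeo {n : ℕ} (f : FDiff n) (k : ℕ) : Prop :=
  ∃ X : FVF n, IsRegDicriticVF X k ∧ IsExp f X

/-- The derivative (linear part) `Df(0)` of `f` at `0`, as a matrix. -/
def Dmat {n : ℕ} (f : FDiff n) : Matrix (Fin n) (Fin n) ℂ :=
  Matrix.of fun i j => MvPowerSeries.coeff (Finsupp.single j 1) (comp f i)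

/-- `L` is the linear diffeomorphism `z ↦ M z`. -/
def IsLinearWith {n : ℕ} (L : FDiff n) (M : Matrix (Fin n) (Fin n) ℂ) : Prop :=
  ∀ i, comp L i = ∑ j, M i j • Z j

/-- Formal partial derivative `∂/∂zᵢ` on `ℂ[[z₁,…,zₙ]]`. -/
def pd {n : ℕ} (i : Fin n) (F : FPS n) : FPS n :=
  fun d => ((d i : ℂ) + 1) * MvPowerSeries.coeff (d + Finsupp.single i 1) F

/-- A formal meromorphic one-form `Σⱼ (Aⱼ/C) dzⱼ`, presented with a common
denominator `C ≠ 0` (its coefficients are elements `Aⱼ/C` of the fraction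
field `K̂ₙ` of `ℂ[[z₁,…,zₙ]]`). -/
structure MeroForm (n : ℕ) where
  A : Fin n → FPS n
  C : FPS n
  hC : C ≠ 0

/-- The one-form is closed (`dω = 0`), with denominators cleared. -/
def FormClosed {n : ℕ} (ω : MeroForm n) : Prop :=
  ∀ i j, pd i (ω.A j) * ω.C - ω.A j * pd i ω.C = pd j (ω.A i) * ω.C - ω.A i * pd j ω.C

/-- `g*ω = ω` (invariance of the one-form under pullback), denominators cleared. -/
def FormInvariantBy {n : ℕ} (g : FDiff n) (ω : MeroForm n) : Prop :=
  ∀ j, (∑ i, g.unop (ω.A i) * pd j (comp g i)) * ω.C = ω.A j * g.unop ω.C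

/-- `g*ω = a ω₁ + b ω₂`, denominators cleared. -/
def FormPullbackComb {n : ℕ} (g : FDiff n) (ω ω₁ ω₂ : MeroForm n) (a b : ℂ) : Prop :=
  ∀ j, (∑ i, g.unop (ω.A i) * pd j (comp g i)) * (ω₁.C * ω₂.C)
    = (a • (ω₁.A j * ω₂.C) + b • (ω₂.A j * ω₁.C)) * g.unop ω.C

/-- `ω₁, ω₂` are `ℂ`-linearly independent as meromorphic one-forms. -/
def FormsIndepC {n : ℕ} (ω₁ ω₂ : MeroForm n) : Prop :=
  ∀ a b : ℂ, (∀ j, a • (ω₁.A j * ω₂.C) + b • (ω₂.A j * ω₁.C) = 0) → a = 0 ∧ b = 0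

/-- A formal curve: a nonzero non-invertible formal series. -/
def IsFormalCurve (φ : FPS 2) : Prop :=
  φ ≠ 0 ∧ MvPowerSeries.constantCoeff φ = 0

/-- The formal curve `φ` is invariant by `f`: `φ ∘ f = u·φ` for a unit `u`. -/
def CurveInvariantBy (f : FDiff 2) (φ : FPS 2) : Prop :=
  ∃ u : FPS 2, IsUnit u ∧ f.unop φ = u * φ

/-- Linear coefficient of `φ` in the variable `zᵢ` (the differential `Dφ(0)`). -/
def lc (i : Fin 2) (φ : FPS 2) : ℂ := MvPowerSeries.coeff (Finsupp.single i 1) φ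

/-- The formal curves `φ, ψ` are transverse: each tangent space (kernel of the
differential at `0`) is one-dimensional and together they span `ℂ²`;
equivalently the two differentials at `0` are linearly independent. -/
def Transverse (φ ψ : FPS 2) : Prop :=
  lc 0 φ * lc 1 ψ - lc 1 φ * lc 0 ψ ≠ 0

/-- The formal power series is convergent (defines a germ of holomorphic
function): its coefficients grow at most geometrically. -/
def IsConvergent {n : ℕ} (F : FPS n) : Prop :=
  ∃ M A : ℝ, ∀ d, ‖MvPowerSeries.coeff d F‖ ≤ M * A ^ deg d

/-- `g* X = (p/q)·X`, denominators cleared: the pullback `g* X = (g⁻¹)_* X`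
of the vector field `X` equals the rational multiple `(p/q) X`. -/
def PullbackEqRat {n : ℕ} (g : FDiff n) (X : FVF n) (p q : FPS n) : Prop :=
  ∀ h, q * g.unop (X (g.unop.symm h)) = p * X h

/-- `g* X = s X₁ + t X₂` (pullback of `X` is a constant combination). -/
def PullbackEqComb {n : ℕ} (g : FDiff n) (X X₁ X₂ : FVF n) (s t : ℂ) : Prop :=
  ∀ h, g.unop (X (g.unop.symm h)) = s • X₁ h + t • X₂ h

end FormalGroups

namespace FormalGroups
open MvPowerSeries Finsupp

private lemma coeff_mul_Z (F : FPS 2) (i : Fin 2) (d : Fin 2 →₀ ℕ) :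
    coeff d (F * Z i) = if d i = 0 then 0 else coeff (d - Finsupp.single i 1) F := by
  have hX : (Z i : FPS 2) = monomial (Finsupp.single i 1) 1 := by
    rw [Z, ← X_pow_eq i 1, pow_one]
  rw [hX, coeff_mul_monomial]
  by_cases h : d i = 0
  · rw [if_neg, if_pos h]
    rw [Finsupp.single_le_iff, h]; omega
  · rw [if_pos, if_neg h, mul_one]
    rw [Finsupp.single_le_iff]; omega

private lemma coeff_pd (F : FPS 2) (i : Fin 2) (d : Fin 2 →₀ ℕ) :
    coeff d (pd i F) = ((d i : ℂ) + 1) * coeff (d + Finsupp.single i 1) F := rfl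

private lemma coeff_combo (i : Fin 2) (F : FPS 2) (c : ℂ) (d : Fin 2 →₀ ℕ) :
    coeff d (pd i F * Z i - c • F) = ((d i : ℂ) - c) * coeff d F := by
  rw [map_sub, coeff_mul_Z, map_smul, smul_eq_mul]
  by_cases h : d i = 0
  · rw [if_pos h, h]; push_cast; ring
  · rw [if_neg h, coeff_pd]
    obtain ⟨k, hk⟩ := Nat.exists_eq_succ_of_ne_zero h
    have h1 : ((d - Finsupp.single i 1) : Fin 2 →₀ ℕ) i = k := by
      simp [Finsupp.sub_apply, Finsupp.single_apply, hk]
    have h2 : d - Finsupp.single i 1 + Finsupp.single i 1 = d := by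
      apply tsub_add_cancel_of_le
      rw [Finsupp.single_le_iff]; omega
    rw [h1, h2, hk]; push_cast; ring

private lemma fin2_eq {d e : Fin 2 →₀ ℕ} (h0 : d 0 = e 0) (h1 : d 1 = e 1) : d = e :=
  Finsupp.ext fun i => by fin_cases i <;> assumption

/-- formal integration lemma in two variables for a closed formal
meromorphic one-form `ω̂ = (P̂ dx + Q̂ dy)/(x^{n+1} y^{m+1})` with poles on the
coordinate axes: `ω̂ = λ dx/x + μ dy/y + d(f̂/(xⁿyᵐ))`.  All identities are
stated with denominators cleared (multiplied by `x^{n+1} y^{m+1}`). -/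
theorem formal_integration_lemma_two_transverse_poles
    (nn mm : ℕ) (P Q : FPS 2)
    (hclosed : (pd 0 Q * Z 0 - ((nn : ℂ) + 1) • Q) * Z 1
             = (pd 1 P * Z 1 - ((mm : ℂ) + 1) • P) * Z 0) :
    ∃ (lam mu : ℂ) (f : FPS 2),
      P = lam • (Z 0 ^ nn * Z 1 ^ (mm + 1)) + (pd 0 f * Z 0 - (nn : ℂ) • f) * Z 1 ∧
      Q = mu • (Z 0 ^ (nn + 1) * Z 1 ^ mm) + (pd 1 f * Z 1 - (mm : ℂ) • f) * Z 0 := by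
  classical
  set s0 : Fin 2 →₀ ℕ := Finsupp.single 0 1 with hs0
  set s1 : Fin 2 →₀ ℕ := Finsupp.single 1 1 with hs1
  have hc : ∀ d : Fin 2 →₀ ℕ,
      (if d 1 = 0 then 0 else ((d 0 : ℂ) - ((nn:ℂ)+1)) * coeff (d - s1) Q)
      = (if d 0 = 0 then 0 else ((d 1 : ℂ) - ((mm:ℂ)+1)) * coeff (d - s0) P) := by
    intro d
    have h := congrArg (coeff d) hclosed
    rw [coeff_mul_Z, coeff_mul_Z, coeff_combo, coeff_combo] at h
    have e1 : ((d - s1) : Fin 2 →₀ ℕ) 0 = d 0 := by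
      simp [hs1, Finsupp.sub_apply, Finsupp.single_apply]
    have e0 : ((d - s0) : Fin 2 →₀ ℕ) 1 = d 1 := by
      simp [hs0, Finsupp.sub_apply, Finsupp.single_apply]
    rw [e1, e0] at h
    exact h
  have key0 : ∀ d : Fin 2 →₀ ℕ, (d + s0 : Fin 2 →₀ ℕ) 0 = d 0 + 1 ∧ (d + s0 : Fin 2 →₀ ℕ) 1 = d 1 := by
    intro d; constructor <;> simp [hs0, Finsupp.single_apply]
  have key1 : ∀ d : Fin 2 →₀ ℕ, (d + s1 : Fin 2 →₀ ℕ) 0 = d 0 ∧ (d + s1 : Fin 2 →₀ ℕ) 1 = d 1 + 1 := by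
    intro d; constructor <;> simp [hs1, Finsupp.single_apply]
  have hc1 : ∀ d : Fin 2 →₀ ℕ,
      ((d 0 : ℂ) - nn) * coeff (d + s0) Q = ((d 1 : ℂ) - mm) * coeff (d + s1) P := by
    intro d
    have h := hc (d + s0 + s1)
    have e2 : d + s0 + s1 - s1 = d + s0 := add_tsub_cancel_right _ _
    have e3 : d + s0 + s1 - s0 = d + s1 := by rw [add_right_comm]; exact add_tsub_cancel_right _ _
    rw [e2, e3] at h
    have a0 : (d + s0 + s1 : Fin 2 →₀ ℕ) 0 = d 0 + 1 := by
      rw [(key1 _).1, (key0 _).1]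
    have a1 : (d + s0 + s1 : Fin 2 →₀ ℕ) 1 = d 1 + 1 := by
      rw [(key1 _).2, (key0 _).2]
    rw [a0, a1, if_neg (by omega), if_neg (by omega)] at h
    push_cast at h
    rw [show ((d 0 : ℂ) + 1) - ((nn:ℂ)+1) = (d 0 : ℂ) - nn from by ring,
        show ((d 1 : ℂ) + 1) - ((mm:ℂ)+1) = (d 1 : ℂ) - mm from by ring] at h
    exact h
  have hc2 : ∀ d : Fin 2 →₀ ℕ, d 0 = 0 → coeff d Q = 0 := by
    intro d h0
    have h := hc (d + s1)
    rw [(key1 _).2, (key1 _).1, h0, if_neg (by omega), if_pos rfl,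
        add_tsub_cancel_right] at h
    have hne : ((0:ℕ) : ℂ) - ((nn:ℂ)+1) ≠ 0 := by
      push_cast; rw [zero_sub, neg_ne_zero]
      exact Nat.cast_add_one_ne_zero nn
    exact (mul_eq_zero.mp h).resolve_left hne
  have hc3 : ∀ d : Fin 2 →₀ ℕ, d 1 = 0 → coeff d P = 0 := by
    intro d h1
    have h := hc (d + s0)
    rw [(key0 _).2, (key0 _).1, h1, if_pos rfl, if_neg (by omega),
        add_tsub_cancel_right] at h
    have hne : ((0:ℕ) : ℂ) - ((mm:ℂ)+1) ≠ 0 := by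
      push_cast; rw [zero_sub, neg_ne_zero]
      exact Nat.cast_add_one_ne_zero mm
    exact (mul_eq_zero.mp h.symm).resolve_left hne
  set e₁ : Fin 2 →₀ ℕ := Finsupp.single 0 nn + Finsupp.single 1 (mm+1) with he₁
  set e₂ : Fin 2 →₀ ℕ := Finsupp.single 0 (nn+1) + Finsupp.single 1 mm with he₂
  have he₁0 : e₁ 0 = nn := by simp [he₁, Finsupp.single_apply]
  have he₁1 : e₁ 1 = mm + 1 := by simp [he₁, Finsupp.single_apply]
  have he₂0 : e₂ 0 = nn + 1 := by simp [he₂, Finsupp.single_apply]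
  have he₂1 : e₂ 1 = mm := by simp [he₂, Finsupp.single_apply]
  set f : FPS 2 := (fun d => if d 0 = nn then
      (if d 1 = mm then 0 else coeff (d + s0) Q / ((d 1 : ℂ) - mm))
      else coeff (d + s1) P / ((d 0 : ℂ) - nn)) with hf
  have hfc : ∀ d : Fin 2 →₀ ℕ, coeff d f = if d 0 = nn then
      (if d 1 = mm then 0 else coeff (d + s0) Q / ((d 1 : ℂ) - mm))
      else coeff (d + s1) P / ((d 0 : ℂ) - nn) := fun d => rfl
  have hmon : ∀ (a b : ℕ) (d : Fin 2 →₀ ℕ),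
      coeff d (Z 0 ^ a * Z 1 ^ b : FPS 2)
        = if d = Finsupp.single 0 a + Finsupp.single 1 b then 1 else 0 := by
    intro a b d
    rw [Z, Z, X_pow_eq, X_pow_eq, monomial_mul_monomial, one_mul, coeff_monomial]
  have castne : ∀ a b : ℕ, a ≠ b → ((a:ℂ) - b ≠ 0) := by
    intro a b hab h
    exact hab (by exact_mod_cast sub_eq_zero.mp h)
  refine ⟨coeff e₁ P, coeff e₂ Q, f, ?_, ?_⟩
  · ext d
    rw [map_add, map_smul, smul_eq_mul, hmon, coeff_mul_Z, coeff_combo]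
    by_cases h1 : d 1 = 0
    · rw [if_pos h1, if_neg (by intro h; rw [h, he₁1] at h1; omega), mul_zero, add_zero]
      exact hc3 d h1
    · rw [if_neg h1]
      obtain ⟨k, hk⟩ := Nat.exists_eq_succ_of_ne_zero h1
      set d' : Fin 2 →₀ ℕ := d - s1 with hd'
      have hd'0 : d' 0 = d 0 := by simp [hd', hs1, Finsupp.sub_apply, Finsupp.single_apply]
      have hd'1 : d' 1 = k := by simp [hd', hs1, Finsupp.sub_apply, Finsupp.single_apply, hk]
      have hd's : d' + s1 = d := by
        apply tsub_add_cancel_of_le; rw [hs1, Finsupp.single_le_iff]; omega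
      rw [hfc, hd'0, hd'1]
      by_cases h0 : d 0 = nn
      · rw [if_pos h0]
        by_cases hkm : k = mm
        · have hde : d = e₁ := fin2_eq (by omega) (by omega)
          rw [if_pos hkm, if_pos hde, mul_one, mul_zero, add_zero, hde]
        · rw [if_neg hkm, if_neg (by intro h; rw [h, he₁1] at hk; omega), mul_zero, zero_add]
          have h := hc1 d'
          rw [hd'0, hd'1, hd's, h0, sub_self, zero_mul] at h
          have := (mul_eq_zero.mp h.symm).resolve_left (castne k mm hkm)
          rw [this, h0, sub_self, zero_mul]
      · rw [if_neg h0, if_neg (by intro h; rw [h, he₁0] at h0; exact h0 rfl), mul_zero, zero_add, hd's]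
        rw [mul_div_cancel₀ _ (castne (d 0) nn h0)]
  · ext d
    rw [map_add, map_smul, smul_eq_mul, hmon, coeff_mul_Z, coeff_combo]
    by_cases h0 : d 0 = 0
    · rw [if_pos h0, if_neg (by intro h; rw [h, he₂0] at h0; omega), mul_zero, add_zero]
      exact hc2 d h0
    · rw [if_neg h0]
      obtain ⟨k, hk⟩ := Nat.exists_eq_succ_of_ne_zero h0
      set d' : Fin 2 →₀ ℕ := d - s0 with hd'
      have hd'0 : d' 0 = k := by simp [hd', hs0, Finsupp.sub_apply, Finsupp.single_apply, hk]
      have hd'1 : d' 1 = d 1 := by simp [hd', hs0, Finsupp.sub_apply, Finsupp.single_apply]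
      have hd's : d' + s0 = d := by
        apply tsub_add_cancel_of_le; rw [hs0, Finsupp.single_le_iff]; omega
      rw [hfc, hd'0, hd'1]
      by_cases hkn : k = nn
      · rw [if_pos hkn]
        by_cases hm : d 1 = mm
        · have hde : d = e₂ := fin2_eq (by omega) (by omega)
          rw [if_pos hm, if_pos hde, mul_one, mul_zero, add_zero, hde]
        · rw [if_neg hm, if_neg (by intro h; rw [h, he₂1] at hm; exact hm rfl), mul_zero, zero_add, hd's]
          rw [mul_div_cancel₀ _ (castne (d 1) mm hm)]
      · rw [if_neg hkn, if_neg (by intro h; rw [h, he₂0] at hk; omega), mul_zero, zero_add]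
        have h := hc1 d'
        rw [hd'0, hd'1, hd's] at h
        have hcne := castne k nn hkn
        field_simp
        linear_combination h

end FormalGroups
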